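/- Let G = {(x,y) ∈ ℝ² : -1 < x < 1 and |x|^α < y < 1} with α > 1, and let p = (x,y) ∈ G with x > 0. Then the vectors v₁ = ((y^(2/α) - x²)/y^(1/α), 0) and v₂ = (0, 2(1-y)(y - x^α)/(1 - x^α)) lie on the boundary of the Hilbert unit ball B_G(p) = {v : F_G(p,v) < 1}, and consequently the Euclidean area of B_G(p) satisfies Vol(B_G(p)) ≥ 4·(1-y)·(y - x^α)·(y^(2/α) - x²) / (y^(1/α)·(1 - x^α)). -/

import Mathlib

open MeasureTheory
open scoped ENNReal Classical

/-- Hilbert Finsler norm `F_C(p,v) = (1/2)‖v‖(1/‖p-p⁻‖+1/‖p-p⁺‖) = (1/2)(1/t⁺+1/t⁻)`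
where `t⁺, t⁻` are the exit times of the line through `p` with direction `±v`. -/
noncomputable def hilbertFinsler {E : Type*} [NormedAddCommGroup E] [NormedSpace ℝ E]
    (C : Set E) (p v : E) : ℝ :=
  if v = 0 then 0 else
    (1 / 2) * (1 / sSup {t : ℝ | 0 < t ∧ p + t • v ∈ C}
      + 1 / sSup {t : ℝ | 0 < t ∧ p - t • v ∈ C})

/-- Unit ball of the Hilbert Finsler norm at `p`. -/
noncomputable def hilbertUnitBall {E : Type*} [NormedAddCommGroup E] [NormedSpace ℝ E]
    (C : Set E) (p : E) : Set E :=
  {v | hilbertFinsler C p v < 1}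

section HilbertAux
open Set

noncomputable abbrev Gset (α : ℝ) : Set (ℝ × ℝ) :=
  {p : ℝ × ℝ | -1 < p.1 ∧ p.1 < 1 ∧ |p.1| ^ α < p.2 ∧ p.2 < 1}

lemma convex_Gset {α : ℝ} (hα : 1 < α) : Convex ℝ (Gset α) := by
  intro p hp q hq a b ha hb hab
  obtain ⟨h1, h2, h3, h4⟩ := hp
  obtain ⟨g1, g2, g3, g4⟩ := hq
  have hα0 : (0:ℝ) ≤ α := by linarith
  rcases eq_or_lt_of_le ha with ha0 | hapos
  · have hb1 : b = 1 := by linarith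
    rw [← ha0, hb1]
    simpa using ⟨g1, g2, g3, g4⟩
  have e1 : (a • p + b • q).1 = a * p.1 + b * q.1 := by
    simp [Prod.fst_add, smul_eq_mul]
  have e2 : (a • p + b • q).2 = a * p.2 + b * q.2 := by
    simp [Prod.snd_add, smul_eq_mul]
  have m1 : 0 < a * (p.1 + 1) := mul_pos hapos (by linarith)
  have m2 : 0 ≤ b * (q.1 + 1) := mul_nonneg hb (by linarith)
  have m3 : 0 < a * (1 - p.1) := mul_pos hapos (by linarith)
  have m4 : 0 ≤ b * (1 - q.1) := mul_nonneg hb (by linarith)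
  have m5 : 0 < a * (1 - p.2) := mul_pos hapos (by linarith)
  have m6 : 0 ≤ b * (1 - q.2) := mul_nonneg hb (by linarith)
  refine ⟨by rw [e1]; nlinarith, by rw [e1]; nlinarith, ?_, by rw [e2]; nlinarith⟩
  have habs : |(a • p + b • q).1| ≤ a * |p.1| + b * |q.1| := by
    simp only [Prod.fst_add, Prod.smul_fst, smul_eq_mul]
    calc |a * p.1 + b * q.1| ≤ |a * p.1| + |b * q.1| := abs_add_le _ _
    _ = a * |p.1| + b * |q.1| := by rw [abs_mul, abs_mul, abs_of_nonneg ha, abs_of_nonneg hb]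
  have step1 : |(a • p + b • q).1| ^ α ≤ (a * |p.1| + b * |q.1|) ^ α :=
    Real.rpow_le_rpow (abs_nonneg _) habs hα0
  have step2 : (a * |p.1| + b * |q.1|) ^ α ≤ a * |p.1| ^ α + b * |q.1| ^ α := by
    have := (convexOn_rpow hα.le).2 (mem_Ici.2 (abs_nonneg p.1)) (mem_Ici.2 (abs_nonneg q.1))
      ha hb hab
    simpa using this
  have step3 : a * |p.1| ^ α + b * |q.1| ^ α < (a • p + b • q).2 := by
    rw [e2]
    have m7 : 0 < a * (p.2 - |p.1| ^ α) := mul_pos hapos (by linarith)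
    have m8 : 0 ≤ b * (q.2 - |q.1| ^ α) := mul_nonneg hb (by linarith)
    nlinarith
  linarith

lemma combine_mem {E : Type*} [AddCommGroup E] [Module ℝ E] {C : Set E} (hC : Convex ℝ C)
    {p u v : E} {s t : ℝ} (hs : 0 < s) (ht : 0 < t)
    (hu : ∀ τ ∈ Ioo (0:ℝ) s, p + τ • u ∈ C) (hv : ∀ τ ∈ Ioo (0:ℝ) t, p + τ • v ∈ C)
    {τ : ℝ} (hτ : τ ∈ Ioo (0:ℝ) (s*t/(s+t))) : p + τ • (u + v) ∈ C := by
  obtain ⟨hτ0, hτlt⟩ := hτ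
  have hst : 0 < s + t := by linarith
  have hkey : τ * (s + t) < s * t := by rw [lt_div_iff₀ hst] at hτlt; nlinarith
  have hσ : τ * (s+t) / t ∈ Ioo (0:ℝ) s := ⟨by positivity, by rw [div_lt_iff₀ ht]; nlinarith⟩
  have hρ : τ * (s+t) / s ∈ Ioo (0:ℝ) t := ⟨by positivity, by rw [div_lt_iff₀ hs]; nlinarith⟩
  have ha : (0:ℝ) < t / (s+t) := div_pos ht hst
  have hb : (0:ℝ) < s / (s+t) := div_pos hs hst
  have hab : t/(s+t) + s/(s+t) = 1 := by rw [← add_div, add_comm, div_self hst.ne']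
  have := hC (hu _ hσ) (hv _ hρ) ha.le hb.le hab
  have e1 : (t/(s+t)) * (τ * (s+t) / t) = τ := by field_simp
  have e2 : (s/(s+t)) * (τ * (s+t) / s) = τ := by field_simp
  have expand : (t/(s+t)) • (p + (τ*(s+t)/t) • u) + (s/(s+t)) • (p + (τ*(s+t)/s) • v)
      = (t/(s+t) + s/(s+t)) • p + (((t/(s+t)) * (τ*(s+t)/t)) • u + ((s/(s+t)) * (τ*(s+t)/s)) • v) := by
    simp only [smul_add, smul_smul, add_smul]; abel
  rw [expand, hab, e1, e2, one_smul, ← smul_add] at this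
  exact this

section dir

variable {α x y : ℝ} (hα : 1 < α) (hx : 0 < x) (hx1 : x < 1) (hxy : x ^ α < y) (hy1 : y < 1)
include hα hx hx1 hxy hy1

lemma hy0 : 0 < y := lt_trans (Real.rpow_pos_of_pos hx α) hxy

lemma hqpow : (y ^ (1/α)) ^ α = y := by
  have hα0 : (0:ℝ) < α := by linarith
  rw [← Real.rpow_mul (hy0 hα hx hx1 hxy hy1).le, one_div, inv_mul_cancel₀ hα0.ne',
    Real.rpow_one]

lemma hxq : x < y ^ (1/α) := by
  have hα0 : (0:ℝ) < α := by linarith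
  have := (Real.rpow_lt_rpow_iff hx.le (Real.rpow_pos_of_pos (hy0 hα hx hx1 hxy hy1) _).le
    hα0).mp (by rw [hqpow hα hx hx1 hxy hy1]; exact hxy)
  exact this

lemma hq1 : y ^ (1/α) < 1 :=
  Real.rpow_lt_one (hy0 hα hx hx1 hxy hy1).le hy1 (by positivity)

lemma hq2 : y ^ (2/α) = (y ^ (1/α)) ^ (2:ℕ) := by
  have h2 : (2:ℝ)/α = (1/α) * ((2:ℕ):ℝ) := by push_cast; ring
  rw [h2, Real.rpow_mul (hy0 hα hx hx1 hxy hy1).le, Real.rpow_natCast]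

lemma hxα1 : x ^ α < 1 := lt_trans hxy hy1

/-- key : for any u, |u|^α < y ↔ |u| < y^(1/α) -/
lemma abs_rpow_lt_iff (u : ℝ) : |u| ^ α < y ↔ |u| < y ^ (1/α) := by
  have hα0 : (0:ℝ) < α := by linarith
  conv_lhs => rw [← hqpow hα hx hx1 hxy hy1]
  exact Real.rpow_lt_rpow_iff (abs_nonneg u) (Real.rpow_pos_of_pos (hy0 hα hx hx1 hxy hy1) _).le hα0

lemma Sdir_right {c : ℝ} (hc : 0 < c) :
    {t : ℝ | 0 < t ∧ ((x + t*c, y) : ℝ × ℝ) ∈ Gset α} = Ioo 0 ((y^(1/α) - x)/c) := by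
  have hq0 : 0 < y ^ (1/α) := Real.rpow_pos_of_pos (hy0 hα hx hx1 hxy hy1) _
  have habs := abs_rpow_lt_iff hα hx hx1 hxy hy1
  have hq1' := hq1 hα hx hx1 hxy hy1
  ext t
  simp only [Gset, mem_setOf_eq, mem_Ioo]
  constructor
  · rintro ⟨ht, _, _, h3, _⟩
    refine ⟨ht, ?_⟩
    have : |x + t*c| < y ^ (1/α) := (habs _).mp h3
    have : x + t*c < y ^ (1/α) := lt_of_abs_lt this
    rw [lt_div_iff₀ hc]; linarith
  · rintro ⟨ht, htl⟩
    rw [lt_div_iff₀ hc] at htl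
    have h0 : 0 < x + t*c := by positivity
    have hlt : x + t*c < y ^ (1/α) := by linarith
    refine ⟨ht, by linarith, by linarith, ?_, hy1⟩
    rw [habs, abs_of_pos h0]; exact hlt

lemma Sdir_left {c : ℝ} (hc : 0 < c) :
    {t : ℝ | 0 < t ∧ ((x - t*c, y) : ℝ × ℝ) ∈ Gset α} = Ioo 0 ((y^(1/α) + x)/c) := by
  have hq0 : 0 < y ^ (1/α) := Real.rpow_pos_of_pos (hy0 hα hx hx1 hxy hy1) _
  have habs := abs_rpow_lt_iff hα hx hx1 hxy hy1
  have hq1' := hq1 hα hx hx1 hxy hy1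
  have hxq' := hxq hα hx hx1 hxy hy1
  ext t
  simp only [Gset, mem_setOf_eq, mem_Ioo]
  constructor
  · rintro ⟨ht, _, _, h3, _⟩
    refine ⟨ht, ?_⟩
    have : |x - t*c| < y ^ (1/α) := (habs _).mp h3
    have := neg_lt_of_abs_lt this
    rw [lt_div_iff₀ hc]; linarith
  · rintro ⟨ht, htl⟩
    rw [lt_div_iff₀ hc] at htl
    have hgt : -(y ^ (1/α)) < x - t*c := by linarith
    have hlt : x - t*c < y ^ (1/α) := by nlinarith
    refine ⟨ht, by linarith, by nlinarith, ?_, hy1⟩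
    rw [habs, abs_lt]; exact ⟨hgt, hlt⟩

lemma Sdir_up {d : ℝ} (hd : 0 < d) :
    {t : ℝ | 0 < t ∧ ((x, y + t*d) : ℝ × ℝ) ∈ Gset α} = Ioo 0 ((1 - y)/d) := by
  ext t
  simp only [Gset, mem_setOf_eq, mem_Ioo, abs_of_pos hx]
  constructor
  · rintro ⟨ht, _, _, _, h4⟩
    exact ⟨ht, by rw [lt_div_iff₀ hd]; linarith⟩
  · rintro ⟨ht, htl⟩
    rw [lt_div_iff₀ hd] at htl
    have : 0 < t * d := by positivity
    exact ⟨ht, by linarith, hx1, by linarith, by linarith⟩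

lemma Sdir_down {d : ℝ} (hd : 0 < d) :
    {t : ℝ | 0 < t ∧ ((x, y - t*d) : ℝ × ℝ) ∈ Gset α} = Ioo 0 ((y - x^α)/d) := by
  ext t
  simp only [Gset, mem_setOf_eq, mem_Ioo, abs_of_pos hx]
  constructor
  · rintro ⟨ht, _, _, h3, _⟩
    exact ⟨ht, by rw [lt_div_iff₀ hd]; linarith⟩
  · rintro ⟨ht, htl⟩
    rw [lt_div_iff₀ hd] at htl
    have : 0 < t * d := by positivity
    exact ⟨ht, by linarith, hx1, by linarith, by linarith⟩

end dir
section bound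

variable {α x y : ℝ} (hα : 1 < α) (hx : 0 < x) (hx1 : x < 1) (hxy : x ^ α < y) (hy1 : y < 1)
include hα hx hx1 hxy hy1

lemma bdd_S {a b : ℝ} (hne : a ≠ 0 ∨ b ≠ 0) :
    BddAbove {t : ℝ | 0 < t ∧ ((x + t*a, y + t*b) : ℝ × ℝ) ∈ Gset α} := by
  have hy0' : 0 < y := hy0 hα hx hx1 hxy hy1
  rcases hne with ha | hb
  · refine ⟨2/|a|, fun t ht => ?_⟩
    simp only [Gset, Set.mem_setOf_eq] at ht
    obtain ⟨ht0, h1, h2, -, -⟩ := ht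
    have habs : |x + t*a| ≤ 1 := (abs_le.mpr ⟨by linarith, by linarith⟩)
    have h2' : |t*a| ≤ 2 := by
      calc |t*a| = |(x + t*a) - x| := by ring_nf
      _ ≤ |x + t*a| + |x| := abs_sub _ _
      _ ≤ 1 + 1 := by rw [abs_of_pos hx]; linarith
      _ = 2 := by norm_num
    rw [abs_mul, abs_of_pos ht0] at h2'
    rw [le_div_iff₀ (abs_pos.mpr ha)]
    exact h2'
  · refine ⟨2/|b|, fun t ht => ?_⟩
    simp only [Gset, Set.mem_setOf_eq] at ht
    obtain ⟨ht0, -, -, h3, h4⟩ := ht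
    have h0 : 0 ≤ |x + t*a| ^ α := Real.rpow_nonneg (abs_nonneg _) _
    have habs : |y + t*b| ≤ 1 := (abs_le.mpr ⟨by linarith, by linarith⟩)
    have h2' : |t*b| ≤ 2 := by
      calc |t*b| = |(y + t*b) - y| := by ring_nf
      _ ≤ |y + t*b| + |y| := abs_sub _ _
      _ ≤ 1 + 1 := by rw [abs_of_pos hy0']; linarith
      _ = 2 := by norm_num
    rw [abs_mul, abs_of_pos ht0] at h2'
    rw [le_div_iff₀ (abs_pos.mpr hb)]
    exact h2'

lemma combine2 {a b s t : ℝ} (hs : 0 < s) (ht : 0 < t)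
    (hu : Set.Ioo (0:ℝ) s ⊆ {τ : ℝ | 0 < τ ∧ ((x + τ*a, y) : ℝ × ℝ) ∈ Gset α})
    (hv : Set.Ioo (0:ℝ) t ⊆ {τ : ℝ | 0 < τ ∧ ((x, y + τ*b) : ℝ × ℝ) ∈ Gset α}) :
    Set.Ioo (0:ℝ) (s*t/(s+t)) ⊆ {τ : ℝ | 0 < τ ∧ ((x + τ*a, y + τ*b) : ℝ × ℝ) ∈ Gset α} := by
  intro τ hτ
  refine ⟨hτ.1, ?_⟩
  have hu' : ∀ τ ∈ Set.Ioo (0:ℝ) s, ((x,y) : ℝ × ℝ) + τ • ((a,0) : ℝ × ℝ) ∈ Gset α := by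
    intro τ hτ'
    have := (hu hτ').2
    simpa [Prod.smul_mk, Prod.mk_add_mk, smul_eq_mul] using this
  have hv' : ∀ τ ∈ Set.Ioo (0:ℝ) t, ((x,y) : ℝ × ℝ) + τ • ((0,b) : ℝ × ℝ) ∈ Gset α := by
    intro τ hτ'
    have := (hv hτ').2
    simpa [Prod.smul_mk, Prod.mk_add_mk, smul_eq_mul] using this
  have := combine_mem (convex_Gset hα) hs ht hu' hv' hτ
  simpa [Prod.smul_mk, Prod.mk_add_mk, smul_eq_mul] using this

omit hα hx hx1 hxy hy1 in
lemma harm_inv {s t : ℝ} (hs : 0 < s) (ht : 0 < t) : 1/(s*t/(s+t)) = 1/s + 1/t := by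
  have h1 : s ≠ 0 := hs.ne'
  have h2 : t ≠ 0 := ht.ne'
  have h3 : s + t ≠ 0 := by positivity
  field_simp
  ring

lemma key_ineq {a b : ℝ} (hne : a ≠ 0 ∨ b ≠ 0) :
    1 / sSup {t : ℝ | 0 < t ∧ ((x + t*a, y + t*b) : ℝ × ℝ) ∈ Gset α}
      ≤ (if 0 ≤ a then a / (y^(1/α) - x) else -a / (y^(1/α) + x))
        + (if 0 ≤ b then b / (1 - y) else -b / (y - x^α)) := by
  have hy0' : 0 < y := hy0 hα hx hx1 hxy hy1
  have hxq' : x < y^(1/α) := hxq hα hx hx1 hxy hy1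
  have hq1' : y^(1/α) < 1 := hq1 hα hx hx1 hxy hy1
  have hA1 : 0 < y^(1/α) - x := by linarith
  have hA2 : 0 < y^(1/α) + x := by linarith
  have hB1 : 0 < 1 - y := by linarith
  have hB2 : 0 < y - x^α := by linarith
  set S := {t : ℝ | 0 < t ∧ ((x + t*a, y + t*b) : ℝ × ℝ) ∈ Gset α} with hS
  have hbdd : BddAbove S := bdd_S hα hx hx1 hxy hy1 hne
  suffices h : ∃ T : ℝ, 0 < T ∧ Set.Ioo (0:ℝ) T ⊆ S ∧
      1/T ≤ (if 0 ≤ a then a / (y^(1/α) - x) else -a / (y^(1/α) + x))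
        + (if 0 ≤ b then b / (1 - y) else -b / (y - x^α)) by
    obtain ⟨T, hT, hsub, harith⟩ := h
    refine le_trans ?_ harith
    have hTle : T ≤ sSup S := by
      have := csSup_le_csSup hbdd (Set.nonempty_Ioo.mpr hT) hsub
      rwa [csSup_Ioo hT] at this
    exact one_div_le_one_div_of_le hT hTle
  -- case analysis
  have Hright : 0 < a → Set.Ioo (0:ℝ) ((y^(1/α)-x)/a) ⊆ {τ : ℝ | 0 < τ ∧ ((x + τ*a, y) : ℝ × ℝ) ∈ Gset α} :=
    fun ha => le_of_eq (Sdir_right hα hx hx1 hxy hy1 ha).symm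
  have Hleft : a < 0 → Set.Ioo (0:ℝ) ((y^(1/α)+x)/(-a)) ⊆ {τ : ℝ | 0 < τ ∧ ((x + τ*a, y) : ℝ × ℝ) ∈ Gset α} := by
    intro ha
    have := (Sdir_left hα hx hx1 hxy hy1 (c := -a) (by linarith)).symm.le
    intro τ hτ
    have h2 := this hτ
    simpa using h2
  have Hup : 0 < b → Set.Ioo (0:ℝ) ((1-y)/b) ⊆ {τ : ℝ | 0 < τ ∧ ((x, y + τ*b) : ℝ × ℝ) ∈ Gset α} :=
    fun hb => le_of_eq (Sdir_up hα hx hx1 hxy hy1 hb).symm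
  have Hdown : b < 0 → Set.Ioo (0:ℝ) ((y-x^α)/(-b)) ⊆ {τ : ℝ | 0 < τ ∧ ((x, y + τ*b) : ℝ × ℝ) ∈ Gset α} := by
    intro hb
    have := (Sdir_down hα hx hx1 hxy hy1 (d := -b) (by linarith)).symm.le
    intro τ hτ
    have h2 := this hτ
    simpa using h2
  rcases lt_trichotomy a 0 with ha | ha | ha <;> rcases lt_trichotomy b 0 with hb | hb | hb
  · -- a<0, b<0
    rw [if_neg (not_le.mpr ha), if_neg (not_le.mpr hb)]
    set s := (y^(1/α)+x)/(-a) with hs_def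
    set t := (y-x^α)/(-b) with ht_def
    have hs : 0 < s := div_pos hA2 (by linarith)
    have ht : 0 < t := div_pos hB2 (by linarith)
    refine ⟨s*t/(s+t), by positivity, combine2 hα hx hx1 hxy hy1 hs ht (Hleft ha) (Hdown hb), le_of_eq ?_⟩
    rw [harm_inv hs ht, hs_def, ht_def, one_div_div, one_div_div]
  · -- a<0, b=0
    rw [if_neg (not_le.mpr ha), if_pos (le_of_eq hb.symm)]
    refine ⟨(y^(1/α)+x)/(-a), div_pos hA2 (by linarith), ?_, le_of_eq ?_⟩
    · intro τ hτ
      have := Hleft ha hτ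
      refine ⟨this.1, ?_⟩
      have h2 := this.2
      rw [hb]
      simpa using h2
    · rw [one_div_div, hb, zero_div, add_zero]
  · -- a<0, b>0
    rw [if_neg (not_le.mpr ha), if_pos hb.le]
    set s := (y^(1/α)+x)/(-a) with hs_def
    set t := (1-y)/b with ht_def
    have hs : 0 < s := div_pos hA2 (by linarith)
    have ht : 0 < t := div_pos hB1 hb
    refine ⟨s*t/(s+t), by positivity, combine2 hα hx hx1 hxy hy1 hs ht (Hleft ha) (Hup hb), le_of_eq ?_⟩
    rw [harm_inv hs ht, hs_def, ht_def, one_div_div, one_div_div]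
  · -- a>0? no: a=0, b<0
    rw [if_pos (le_of_eq ha.symm), if_neg (not_le.mpr hb)]
    refine ⟨(y-x^α)/(-b), div_pos hB2 (by linarith), ?_, le_of_eq ?_⟩
    · intro τ hτ
      have := Hdown hb hτ
      refine ⟨this.1, ?_⟩
      have h2 := this.2
      rw [ha]
      simpa using h2
    · rw [one_div_div, ha]
      rw [zero_div, zero_add]
  · exact hne.elim (fun h => absurd ha h) (fun h => absurd hb h)
  · -- a=0, b>0
    rw [if_pos (le_of_eq ha.symm), if_pos hb.le]
    refine ⟨(1-y)/b, div_pos hB1 hb, ?_, le_of_eq ?_⟩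
    · intro τ hτ
      have := Hup hb hτ
      refine ⟨this.1, ?_⟩
      have h2 := this.2
      rw [ha]
      simpa using h2
    · rw [one_div_div, ha, zero_div, zero_add]
  · -- a>0, b<0
    rw [if_pos ha.le, if_neg (not_le.mpr hb)]
    set s := (y^(1/α)-x)/a with hs_def
    set t := (y-x^α)/(-b) with ht_def
    have hs : 0 < s := div_pos hA1 ha
    have ht : 0 < t := div_pos hB2 (by linarith)
    refine ⟨s*t/(s+t), by positivity, combine2 hα hx hx1 hxy hy1 hs ht (Hright ha) (Hdown hb), le_of_eq ?_⟩
    rw [harm_inv hs ht, hs_def, ht_def, one_div_div, one_div_div]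
  · -- a>0, b=0
    rw [if_pos ha.le, if_pos (le_of_eq hb.symm)]
    refine ⟨(y^(1/α)-x)/a, div_pos hA1 ha, ?_, le_of_eq ?_⟩
    · intro τ hτ
      have := Hright ha hτ
      refine ⟨this.1, ?_⟩
      have h2 := this.2
      rw [hb]
      simpa using h2
    · rw [one_div_div, hb, zero_div, add_zero]
  · -- a>0, b>0
    rw [if_pos ha.le, if_pos hb.le]
    set s := (y^(1/α)-x)/a with hs_def
    set t := (1-y)/b with ht_def
    have hs : 0 < s := div_pos hA1 ha
    have ht : 0 < t := div_pos hB1 hb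
    refine ⟨s*t/(s+t), by positivity, combine2 hα hx hx1 hxy hy1 hs ht (Hright ha) (Hup hb), le_of_eq ?_⟩
    rw [harm_inv hs ht, hs_def, ht_def, one_div_div, one_div_div]

end bound
section rhombus
open intervalIntegral

lemma vol_rhombus {w h : ℝ} (hw : 0 < w) (hh : 0 < h) :
    volume {v : ℝ × ℝ | |v.1| *h + |v.2| *w < w*h} = ENNReal.ofReal (2*(w*h)) := by
  have hcont : Continuous (fun a : ℝ => (w - |a|)*h/w) := by continuity
  have hcont' : Continuous (fun a : ℝ => -((w - |a|)*h/w)) := by continuity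
  have hR : {v : ℝ × ℝ | |v.1| *h + |v.2| *w < w*h}
      = regionBetween (fun a => -((w - |a|)*h/w)) (fun a => (w - |a|)*h/w) (Set.Ioo (-w) w) := by
    ext ⟨a, b⟩
    simp only [regionBetween, Set.mem_setOf_eq, Set.mem_Ioo]
    constructor
    · intro hab
      have h1 : |a| < w := by nlinarith [abs_nonneg b, abs_nonneg a]
      have h2 : |b| < (w - |a|)*h/w := by rw [lt_div_iff₀ hw]; nlinarith
      exact ⟨abs_lt.mp h1, abs_lt.mp h2⟩
    · rintro ⟨ha, hb⟩
      have h1 : |a| < w := abs_lt.mpr ha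
      have h2 : |b| < (w - |a|)*h/w := abs_lt.mpr hb
      rw [lt_div_iff₀ hw] at h2
      nlinarith
  have hint_f : MeasureTheory.IntegrableOn (fun a : ℝ => -((w - |a|)*h/w)) (Set.Ioo (-w) w) :=
    (hcont'.integrableOn_Icc).mono_set Set.Ioo_subset_Icc_self
  have hint_g : MeasureTheory.IntegrableOn (fun a : ℝ => (w - |a|)*h/w) (Set.Ioo (-w) w) :=
    (hcont.integrableOn_Icc).mono_set Set.Ioo_subset_Icc_self
  have hfg : ∀ a ∈ Set.Ioo (-w) w, -((w - |a|)*h/w) ≤ (w - |a|)*h/w := by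
    intro a ha
    have : |a| < w := abs_lt.mpr ⟨ha.1, ha.2⟩
    have hc : 0 ≤ (w - |a|)*h/w := div_nonneg (mul_nonneg (by linarith) hh.le) hw.le
    linarith
  rw [hR, MeasureTheory.Measure.volume_eq_prod, volume_regionBetween_eq_integral hint_f hint_g measurableSet_Ioo hfg]
  congr 1
  have heq : ∀ a : ℝ, ((fun a => (w - |a|)*h/w) - (fun a => -((w - |a|)*h/w))) a
      = 2*((w - |a|)*h/w) := by intro a; simp [Pi.sub_apply]; ring
  calc ∫ a in Set.Ioo (-w) w, ((fun a => (w - |a|)*h/w) - fun a => -((w - |a|)*h/w)) a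
      = ∫ a in Set.Ioo (-w) w, 2*((w - |a|)*h/w) := by
        apply MeasureTheory.setIntegral_congr_fun measurableSet_Ioo
        intro a _; exact heq a
    _ = ∫ a in Set.Ioc (-w) w, 2*((w - |a|)*h/w) := (MeasureTheory.integral_Ioc_eq_integral_Ioo).symm
    _ = ∫ a in (-w)..w, 2*((w - |a|)*h/w) := (intervalIntegral.integral_of_le (by linarith)).symm
    _ = 2*(w*h) := by
        have hii : ∀ (u v : ℝ), IntervalIntegrable (fun a : ℝ => 2*((w - |a|)*h/w)) volume u v := by
          intro u v
          exact (by continuity : Continuous (fun a : ℝ => 2*((w - |a|)*h/w))).intervalIntegrable u v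
        rw [← intervalIntegral.integral_add_adjacent_intervals (b := 0) (hii _ _) (hii _ _)]
        have hleft : ∫ a in (-w)..(0:ℝ), 2*((w - |a|)*h/w)
            = ∫ a in (-w)..(0:ℝ), (2*h + (2*h/w)*a) := by
          apply intervalIntegral.integral_congr
          intro a ha
          rw [Set.uIcc_of_le (by linarith : -w ≤ (0:ℝ))] at ha
          dsimp only
          rw [abs_of_nonpos ha.2]
          field_simp
          ring
        have hright : ∫ a in (0:ℝ)..w, 2*((w - |a|)*h/w)
            = ∫ a in (0:ℝ)..w, (2*h - (2*h/w)*a) := by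
          apply intervalIntegral.integral_congr
          intro a ha
          rw [Set.uIcc_of_le (by linarith : (0:ℝ) ≤ w)] at ha
          dsimp only
          rw [abs_of_nonneg ha.1]
          field_simp
        have c1 : IntervalIntegrable (fun _ : ℝ => 2*h) volume (-w) 0 := intervalIntegrable_const
        have c2 : ∀ (u v : ℝ), IntervalIntegrable (fun a : ℝ => (2*h/w)*a) volume u v :=
          fun u v => (continuous_const.mul continuous_id).intervalIntegrable u v
        rw [hleft, hright]
        rw [intervalIntegral.integral_add c1 (c2 _ _),
          intervalIntegral.integral_sub intervalIntegrable_const (c2 _ _),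
          intervalIntegral.integral_const, intervalIntegral.integral_const,
          intervalIntegral.integral_const_mul, intervalIntegral.integral_const_mul,
          integral_id, integral_id]
        simp only [smul_eq_mul]
        field_simp
        ring

end rhombus
lemma if_sum {a A B : ℝ} (hA : 0 < A) (hB : 0 < B) :
    ((if 0 ≤ a then a/A else -a/B) + (if 0 ≤ -a then -a/A else -(-a)/B)) = |a| * (1/A + 1/B) := by
  rcases lt_trichotomy a 0 with h|h|h
  · rw [if_neg (not_le.mpr h), if_pos (by linarith : (0:ℝ) ≤ -a), abs_of_neg h]; ring
  · simp [h]
  · rw [if_pos h.le, if_neg (not_le.mpr (by linarith : -a < 0)), abs_of_pos h]; ring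

end HilbertAux

theorem stmt_12 (α : ℝ) (hα : 1 < α) (x y : ℝ)
    (hp : ((x, y) : ℝ × ℝ) ∈ {p : ℝ × ℝ | -1 < p.1 ∧ p.1 < 1 ∧ |p.1| ^ α < p.2 ∧ p.2 < 1})
    (hx : 0 < x) :
    hilbertFinsler {p : ℝ × ℝ | -1 < p.1 ∧ p.1 < 1 ∧ |p.1| ^ α < p.2 ∧ p.2 < 1}
        (x, y) (((y ^ (2 / α) - x ^ (2 : ℕ)) / y ^ (1 / α), 0)) = 1 ∧
    hilbertFinsler {p : ℝ × ℝ | -1 < p.1 ∧ p.1 < 1 ∧ |p.1| ^ α < p.2 ∧ p.2 < 1}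
        (x, y) ((0, 2 * (1 - y) * (y - x ^ α) / (1 - x ^ α))) = 1 ∧
    ENNReal.ofReal
        (4 * (1 - y) * (y - x ^ α) * (y ^ (2 / α) - x ^ (2 : ℕ)) / (y ^ (1 / α) * (1 - x ^ α)))
      ≤ volume (hilbertUnitBall
          {p : ℝ × ℝ | -1 < p.1 ∧ p.1 < 1 ∧ |p.1| ^ α < p.2 ∧ p.2 < 1} (x, y)) := by
  have hGset : {p : ℝ × ℝ | -1 < p.1 ∧ p.1 < 1 ∧ |p.1| ^ α < p.2 ∧ p.2 < 1} = Gset α := rfl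
  rw [hGset]
  obtain ⟨h1, h2, h3, h4⟩ := hp
  dsimp only at h1 h2 h3 h4
  have hx1 : x < 1 := h2
  have hxy : x ^ α < y := by rwa [abs_of_pos hx] at h3
  have hy1 : y < 1 := h4
  have hy0' : 0 < y := hy0 hα hx hx1 hxy hy1
  have hxq' : x < y ^ (1/α) := hxq hα hx hx1 hxy hy1
  have hq1' : y ^ (1/α) < 1 := hq1 hα hx hx1 hxy hy1
  have hq2' : y ^ (2/α) = (y ^ (1/α)) ^ (2:ℕ) := hq2 hα hx hx1 hxy hy1
  have hq0 : 0 < y ^ (1/α) := Real.rpow_pos_of_pos hy0' _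
  have hA1 : 0 < y ^ (1/α) - x := by linarith
  have hA2 : 0 < y ^ (1/α) + x := by linarith
  have hB1 : 0 < 1 - y := by linarith
  have hB2 : 0 < y - x ^ α := by linarith
  have hxa1 : 0 < 1 - x ^ α := by linarith
  have hwnum : 0 < y ^ (2/α) - x ^ (2:ℕ) := by rw [hq2']; nlinarith
  have hw0 : 0 < (y ^ (2/α) - x ^ (2:ℕ)) / y ^ (1/α) := div_pos hwnum hq0
  have hh0 : 0 < 2 * (1 - y) * (y - x ^ α) / (1 - x ^ α) := by positivity
  refine ⟨?goal1, ?goal2, ?goal3⟩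
  case goal1 =>
    rw [hilbertFinsler,
      if_neg (by simp only [Prod.mk_eq_zero, not_and]; exact fun hc _ => hw0.ne' hc)]
    have key1 : ∀ t : ℝ, ((x,y) : ℝ×ℝ) + t • (((y^(2/α) - x^(2:ℕ))/y^(1/α), (0:ℝ)) : ℝ×ℝ)
        = ((x + t*((y^(2/α) - x^(2:ℕ))/y^(1/α)), y) : ℝ×ℝ) := fun t => by
      simp [Prod.ext_iff, smul_eq_mul]
    have key2 : ∀ t : ℝ, ((x,y) : ℝ×ℝ) - t • (((y^(2/α) - x^(2:ℕ))/y^(1/α), (0:ℝ)) : ℝ×ℝ)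
        = ((x - t*((y^(2/α) - x^(2:ℕ))/y^(1/α)), y) : ℝ×ℝ) := fun t => by
      simp [Prod.ext_iff, smul_eq_mul]
    simp_rw [key1, key2]
    rw [Sdir_right hα hx hx1 hxy hy1 hw0, Sdir_left hα hx hx1 hxy hy1 hw0,
      csSup_Ioo (div_pos hA1 hw0), csSup_Ioo (div_pos hA2 hw0), one_div_div, one_div_div]
    rw [hq2']
    field_simp [hA1.ne', hA2.ne', hq0.ne']
    ring
  case goal2 =>
    rw [hilbertFinsler,
      if_neg (by simp only [Prod.mk_eq_zero, not_and]; exact fun _ => hh0.ne')]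
    have key1 : ∀ t : ℝ, ((x,y) : ℝ×ℝ) + t • (((0:ℝ), 2*(1-y)*(y-x^α)/(1-x^α)) : ℝ×ℝ)
        = ((x, y + t*(2*(1-y)*(y-x^α)/(1-x^α))) : ℝ×ℝ) := fun t => by
      simp [Prod.ext_iff, smul_eq_mul]
    have key2 : ∀ t : ℝ, ((x,y) : ℝ×ℝ) - t • (((0:ℝ), 2*(1-y)*(y-x^α)/(1-x^α)) : ℝ×ℝ)
        = ((x, y - t*(2*(1-y)*(y-x^α)/(1-x^α))) : ℝ×ℝ) := fun t => by
      simp [Prod.ext_iff, smul_eq_mul]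
    simp_rw [key1, key2]
    rw [Sdir_up hα hx hx1 hxy hy1 hh0, Sdir_down hα hx hx1 hxy hy1 hh0,
      csSup_Ioo (div_pos hB1 hh0), csSup_Ioo (div_pos hB2 hh0), one_div_div, one_div_div]
    field_simp [hB1.ne', hB2.ne', hxa1.ne']
    ring
  case goal3 =>
    have hsub : {v : ℝ×ℝ | |v.1| * (2*(1-y)*(y-x^α)/(1-x^α))
          + |v.2| * ((y^(2/α) - x^(2:ℕ))/y^(1/α))
        < ((y^(2/α) - x^(2:ℕ))/y^(1/α)) * (2*(1-y)*(y-x^α)/(1-x^α))}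
        ⊆ hilbertUnitBall (Gset α) (x,y) := by
      rintro ⟨a, b⟩ hv
      simp only [Set.mem_setOf_eq] at hv
      simp only [hilbertUnitBall, Set.mem_setOf_eq]
      by_cases hv0 : ((a,b) : ℝ×ℝ) = (0 : ℝ×ℝ)
      · rw [hilbertFinsler, if_pos hv0]; norm_num
      · rw [hilbertFinsler, if_neg hv0]
        have hne : a ≠ 0 ∨ b ≠ 0 := by
          by_contra hc; push_neg at hc; exact hv0 (by rw [hc.1, hc.2]; rfl)
        have hne' : -a ≠ 0 ∨ -b ≠ 0 := by
          rcases hne with h|h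
          exacts [Or.inl (neg_ne_zero.mpr h), Or.inr (neg_ne_zero.mpr h)]
        have key1 : ∀ t : ℝ, ((x,y):ℝ×ℝ) + t • ((a,b):ℝ×ℝ) = ((x + t*a, y + t*b) : ℝ×ℝ) :=
          fun t => by simp [Prod.ext_iff, smul_eq_mul]
        have key2 : ∀ t : ℝ, ((x,y):ℝ×ℝ) - t • ((a,b):ℝ×ℝ)
            = ((x + t*(-a), y + t*(-b)) : ℝ×ℝ) := fun t => by
          simp [Prod.ext_iff, smul_eq_mul]; constructor <;> ring
        simp_rw [key1, key2]
        have k1 := key_ineq hα hx hx1 hxy hy1 hne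
        have k2 := key_ineq hα hx hx1 hxy hy1 hne'
        have hsa := if_sum (a := a) hA1 hA2
        have hsb := if_sum (a := b) hB1 hB2
        have hKa : 1/(y^(1/α)-x) + 1/(y^(1/α)+x) = 2/((y^(2/α) - x^(2:ℕ))/y^(1/α)) := by
          rw [hq2']
          have hd : ((y^(1/α))^(2:ℕ) - x^(2:ℕ)) ≠ 0 := by nlinarith
          field_simp [hA1.ne', hA2.ne', hq0.ne']
          ring
        have hKb : 1/(1-y) + 1/(y-x^α) = 2/(2*(1-y)*(y-x^α)/(1-x^α)) := by
          field_simp [hB1.ne', hB2.ne', hxa1.ne']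
          ring
        have hlt : |a| * (2/((y^(2/α) - x^(2:ℕ))/y^(1/α)))
            + |b| * (2/(2*(1-y)*(y-x^α)/(1-x^α))) < 2 := by
          have e : |a| * (2/((y^(2/α) - x^(2:ℕ))/y^(1/α)))
              + |b| * (2/(2*(1-y)*(y-x^α)/(1-x^α)))
              = 2*((|a| * (2*(1-y)*(y-x^α)/(1-x^α)) + |b| * ((y^(2/α) - x^(2:ℕ))/y^(1/α)))
                  / (((y^(2/α) - x^(2:ℕ))/y^(1/α)) * (2*(1-y)*(y-x^α)/(1-x^α)))) := by
            field_simp [hw0.ne', hh0.ne']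
          have lt1 : (|a| * (2*(1-y)*(y-x^α)/(1-x^α)) + |b| * ((y^(2/α) - x^(2:ℕ))/y^(1/α)))
              / (((y^(2/α) - x^(2:ℕ))/y^(1/α)) * (2*(1-y)*(y-x^α)/(1-x^α))) < 1 :=
            (div_lt_one (by positivity)).mpr hv
          rw [e]; linarith
        rw [hKa] at hsa
        rw [hKb] at hsb
        linarith [k1, k2]
    rw [show (4 * (1 - y) * (y - x ^ α) * (y ^ (2 / α) - x ^ (2 : ℕ)) / (y ^ (1 / α) * (1 - x ^ α)))
        = 2*(((y^(2/α) - x^(2:ℕ))/y^(1/α)) * (2*(1-y)*(y-x^α)/(1-x^α))) from by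
          field_simp [hq0.ne', hxa1.ne']
          ring,
      ← vol_rhombus hw0 hh0]
    exact measure_mono hsub
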